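/- Let R be a ring, let f : {1,…,n} → {1,…,m} be a weakly increasing surjection, and let A be an upper triangular n×n matrix over R all of whose diagonal entries are units. Then there exists an upper triangular m×m matrix C over R with unit diagonal entries such that the matrix B := A·κ_f(C) satisfies (B − I_n)_{p,q} = 0 whenever both p and q are f-stable (in particular B_{p,p} = 1 for every f-stable p and B_{p,q} = 0 for p ≠ q both f-stable). Moreover C can be chosen so that for every index i with A_{i,j} = 0 for all j ≠ i, also B_{i,j} = 0 for all j ≠ i. -/

import Mathlib

open Finset

/-- Entries of powers of a strictly upper triangular matrix. -/
lemma strictUpper_pow_apply {R : Type*} [Ring R] {m : ℕ}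
    (N : Matrix (Fin m) (Fin m) R) (h : ∀ i j : Fin m, j ≤ i → N i j = 0) :
    ∀ (k : ℕ) (i j : Fin m), (N ^ k) i j ≠ 0 → (i : ℕ) + k ≤ (j : ℕ) := by
  intro k
  induction k with
  | zero =>
    intro i j hij
    rw [pow_zero] at hij
    rcases eq_or_ne i j with rfl | hne
    · omega
    · simp [Matrix.one_apply_ne hne] at hij
  | succ k ih =>
    intro i j hij
    rw [pow_succ', Matrix.mul_apply] at hij
    obtain ⟨r, -, hr⟩ := Finset.exists_ne_zero_of_sum_ne_zero hij
    have h1 : N i r ≠ 0 := fun h0 => hr (by simp [h0])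
    have h2 : (N ^ k) r j ≠ 0 := fun h0 => hr (by simp [h0])
    have hir : (i : ℕ) < (r : ℕ) := by
      by_contra hc
      exact h1 (h i r (by omega))
    have := ih r j h2
    omega

lemma strictUpper_nilpotent {R : Type*} [Ring R] {m : ℕ}
    (N : Matrix (Fin m) (Fin m) R) (h : ∀ i j : Fin m, j ≤ i → N i j = 0) :
    N ^ m = 0 := by
  ext i j
  by_contra hc
  have := strictUpper_pow_apply N h m i j hc
  omega

/-- Right inverse of an upper triangular matrix with unit diagonal, over a
noncommutative ring, preserving off-diagonal zero rows. -/
lemma exists_right_inv {R : Type*} [Ring R] {m : ℕ}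
    (T : Matrix (Fin m) (Fin m) R)
    (htri : ∀ i j : Fin m, j < i → T i j = 0)
    (hunit : ∀ i : Fin m, IsUnit (T i i)) :
    ∃ C : Matrix (Fin m) (Fin m) R,
      (∀ i j : Fin m, j < i → C i j = 0) ∧ (∀ i : Fin m, IsUnit (C i i)) ∧
      T * C = 1 ∧
      (∀ i : Fin m, (∀ j, j ≠ i → T i j = 0) → ∀ j, j ≠ i → C i j = 0) := by
  set e : Fin m → R := fun i => Ring.inverse (T i i) with he
  set N : Matrix (Fin m) (Fin m) R :=
    Matrix.of (fun i j => if i < j then e i * T i j else 0) with hN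
  have hNs : ∀ i j : Fin m, j ≤ i → N i j = 0 := by
    intro i j hij
    simp only [hN, Matrix.of_apply, if_neg (not_lt.mpr hij)]
  set S : Matrix (Fin m) (Fin m) R := ∑ i ∈ range m, (-N) ^ i with hS
  have hNegNs : ∀ i j : Fin m, j ≤ i → (-N) i j = 0 := by
    intro i j hij; simp [hNs i j hij]
  -- S below diagonal is zero, diagonal is 1
  have hSlow : ∀ i j : Fin m, j < i → S i j = 0 := by
    intro i j hij
    rw [hS, Matrix.sum_apply]
    refine Finset.sum_eq_zero fun k hk => ?_
    by_contra hc
    have := strictUpper_pow_apply (-N) hNegNs k i j hc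
    omega
  have hSdiag : ∀ i : Fin m, S i i = 1 := by
    intro i
    rw [hS, Matrix.sum_apply]
    rcases Nat.eq_zero_or_pos m with rfl | hm
    · exact absurd i.2 (by omega)
    rw [Finset.sum_eq_single 0]
    · simp [Matrix.one_apply]
    · intro k hk hk0
      by_contra hc
      have := strictUpper_pow_apply (-N) hNegNs k i i hc
      omega
    · simp [hm]
  -- key identity : T = diagonal (fun i => T i i) * (1 + N)
  have hfact : T = Matrix.diagonal (fun i => T i i) * (1 + N) := by
    ext i j
    rw [Matrix.diagonal_mul]
    rcases lt_trichotomy i j with hij | rfl | hij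
    · simp only [Matrix.add_apply, Matrix.one_apply_ne (ne_of_lt hij), hN,
        Matrix.of_apply, if_pos hij, zero_add, he, ← mul_assoc,
        Ring.mul_inverse_cancel _ (hunit i), one_mul]
    · simp [hNs i i le_rfl]
    · simp [Matrix.one_apply_ne (ne_of_gt hij), hNs i j (le_of_lt hij),
        htri i j hij]
  have hgeom : (1 + N) * S = 1 := by
    have h1 : (1 : Matrix (Fin m) (Fin m) R) + N = -((-N) - 1) := by
      rw [neg_sub]; abel
    rw [h1, neg_mul, mul_geom_sum, strictUpper_nilpotent (-N) hNegNs]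
    simp
  refine ⟨S * Matrix.diagonal e, ?_, ?_, ?_, ?_⟩
  · intro i j hij
    rw [Matrix.mul_diagonal, hSlow i j hij, zero_mul]
  · intro i
    rw [Matrix.mul_diagonal, hSdiag, one_mul, he]
    exact isUnit_ringInverse.mpr (hunit i)
  · -- T * (S * diagonal e) = 1
    rw [hfact, mul_assoc, ← mul_assoc (1 + N), hgeom, one_mul,
      Matrix.diagonal_mul_diagonal]
    have : (fun i => T i i * e i) = fun _ => (1 : R) :=
      funext fun i => Ring.mul_inverse_cancel _ (hunit i)
    rw [this, Matrix.diagonal_one]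
  · -- zero-row preservation
    intro i hrow j hj
    have hNrow : ∀ l, N i l = 0 := by
      intro l
      rcases eq_or_ne l i with rfl | hl
      · exact hNs l l le_rfl
      · rcases lt_or_ge i l with h' | h'
        · simp [hN, if_pos h', hrow l hl]
        · exact hNs i l h'
    have hpow : ∀ k, 1 ≤ k → ∀ l, ((-N) ^ k) i l = 0 := by
      intro k hk l
      obtain ⟨k', rfl⟩ : ∃ k', k = k' + 1 := ⟨k - 1, by omega⟩
      rw [pow_succ', Matrix.mul_apply]
      refine Finset.sum_eq_zero fun r _ => ?_
      simp [hNrow r]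
    have hSrow : ∀ l, S i l = (1 : Matrix (Fin m) (Fin m) R) i l := by
      intro l
      rw [hS, Matrix.sum_apply]
      rcases Nat.eq_zero_or_pos m with rfl | hm
      · exact absurd i.2 (by omega)
      rw [Finset.sum_eq_single 0]
      · simp
      · intro k hk hk0; exact hpow k (by omega) l
      · simp [hm]
    rw [Matrix.mul_diagonal, hSrow j, Matrix.one_apply_ne (Ne.symm hj),
      zero_mul]

/-- The cloning map `κ_f` associated to a weakly increasing surjection
`f : {1,…,n} → {1,…,m}`: the entry `(κ_f C)_{p,q}` is `C_{f(p), f(q)}` if `p = q`,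
or if `f(p) < f(q)` and `p` is the largest element of its fiber (`f`-stable), or if
`f(p) > f(q)` and `p` is the smallest element of its fiber; all other entries are `0`. -/
def hcloneMat {R : Type*} [Zero R] {n m : ℕ} (f : Fin n → Fin m)
    (C : Matrix (Fin m) (Fin m) R) : Matrix (Fin n) (Fin n) R :=
  Matrix.of fun p q =>
    if p = q ∨ (f p < f q ∧ ∀ r, f r = f p → r ≤ p) ∨
        (f q < f p ∧ ∀ r, f r = f p → p ≤ r) then
      C (f p) (f q)
    else 0

/-- given a weakly increasing surjection `f : {1,…,n} → {1,…,m}` and an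
upper triangular `A ∈ B_n(R)`, there is an upper triangular `C ∈ B_m(R)` (unit diagonal)
such that `B = A · κ_f(C)` satisfies `(B - I)_{p,q} = 0` whenever `p` and `q` are both
`f`-stable; moreover `C` can be chosen preserving off-diagonal rows of zeroes of `A`. -/
theorem borel_reduction {R : Type*} [Ring R] {n m : ℕ} (f : Fin n → Fin m)
    (hmono : Monotone f) (hsurj : Function.Surjective f)
    (A : Matrix (Fin n) (Fin n) R)
    (htri : ∀ i j : Fin n, j < i → A i j = 0)
    (hunit : ∀ i : Fin n, IsUnit (A i i)) :
    ∃ C : Matrix (Fin m) (Fin m) R,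
      (∀ i j : Fin m, j < i → C i j = 0) ∧ (∀ i : Fin m, IsUnit (C i i)) ∧
      (∀ p q : Fin n, (∀ r, f r = f p → r ≤ p) → (∀ r, f r = f q → r ≤ q) →
        (A * hcloneMat f C - 1) p q = 0) ∧
      (∀ i : Fin n, (∀ j, j ≠ i → A i j = 0) →
        ∀ j, j ≠ i → (A * hcloneMat f C) i j = 0) := by
  classical
  have hfib : ∀ k : Fin m, (Finset.univ.filter (fun r => f r = k)).Nonempty := by
    intro k; obtain ⟨r, hr⟩ := hsurj k; exact ⟨r, by simp [hr]⟩
  set σ : Fin m → Fin n := fun k => (Finset.univ.filter (fun r => f r = k)).max' (hfib k)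
    with hσdef
  have hfσ : ∀ k, f (σ k) = k := by
    intro k
    have := Finset.max'_mem _ (hfib k)
    simpa [hσdef] using this
  have hmax : ∀ (k : Fin m) (r : Fin n), f r = k → r ≤ σ k := by
    intro k r hr
    exact Finset.le_max' _ r (by simp [hr])
  have hstable_eq : ∀ p : Fin n, (∀ r, f r = f p → r ≤ p) → p = σ (f p) := by
    intro p hp
    exact le_antisymm (hmax _ p rfl) (hp _ (hfσ _))
  have hσmono : StrictMono σ := by
    intro k l hkl
    rcases lt_or_ge (σ k) (σ l) with h | h
    · exact h
    · have h2 := hmono h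
      rw [hfσ, hfσ] at h2
      exact absurd h2 (not_le.mpr hkl)
  set T : Matrix (Fin m) (Fin m) R := A.submatrix σ σ with hT
  have hTtri : ∀ i j : Fin m, j < i → T i j = 0 := by
    intro i j hij
    exact htri _ _ (hσmono hij)
  have hTunit : ∀ i : Fin m, IsUnit (T i i) := fun i => hunit (σ i)
  obtain ⟨C, hCtri, hCunit, hTC, hCrow⟩ := exists_right_inv T hTtri hTunit
  -- value of the cloned matrix at (σ k, q) for a stable q
  have hκ : ∀ (q : Fin n), (∀ r, f r = f q → r ≤ q) → ∀ k : Fin m,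
      hcloneMat f C (σ k) q = C k (f q) := by
    intro q hq k
    simp only [hcloneMat, Matrix.of_apply, hfσ]
    split_ifs with h
    · rfl
    · push_neg at h
      obtain ⟨h1, h2, h3⟩ := h
      rcases lt_trichotomy k (f q) with hk | hk | hk
      · obtain ⟨r, hr1, hr2⟩ := h2 hk
        exact absurd (hmax k r hr1) (not_le.mpr hr2)
      · exact absurd (by rw [hk]; exact (hstable_eq q hq).symm) h1
      · exact (hCtri _ _ hk).symm
  -- the cloned matrix vanishes at (r, q) for non-stable r and stable q
  have hκ0 : ∀ (r q : Fin n), r ≠ σ (f r) → (∀ s, f s = f q → s ≤ q) →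
      hcloneMat f C r q = 0 := by
    intro r q hr hq
    simp only [hcloneMat, Matrix.of_apply]
    split_ifs with h
    · rcases h with rfl | ⟨-, h2⟩ | ⟨h1, -⟩
      · exact absurd (hstable_eq r hq) hr
      · exact absurd (le_antisymm (hmax _ _ rfl) (h2 _ (hfσ _))) hr
      · exact hCtri _ _ h1
    · rfl
  refine ⟨C, hCtri, hCunit, ?_, ?_⟩
  · intro p q hp hq
    have hpσ : p = σ (f p) := hstable_eq p hp
    have hqσ : q = σ (f q) := hstable_eq q hq
    have hsum : ∑ r : Fin n, A p r * hcloneMat f C r q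
        = ∑ r ∈ Finset.univ.image σ, A p r * hcloneMat f C r q := by
      symm
      apply Finset.sum_subset (Finset.subset_univ _)
      intro r _ hr
      have hrne : r ≠ σ (f r) := by
        intro h
        exact hr (Finset.mem_image.mpr ⟨f r, Finset.mem_univ _, h.symm⟩)
      rw [hκ0 r q hrne hq, mul_zero]
    have hsum2 : ∑ r ∈ Finset.univ.image σ, A p r * hcloneMat f C r q
        = ∑ k : Fin m, A p (σ k) * hcloneMat f C (σ k) q :=
      Finset.sum_image (fun a _ b _ h => hσmono.injective h)
    have hsum3 : ∑ k : Fin m, A p (σ k) * hcloneMat f C (σ k) q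
        = ∑ k : Fin m, T (f p) k * C k (f q) := by
      apply Finset.sum_congr rfl
      intro k _
      rw [hκ q hq k, hT]
      congr 1
      rw [Matrix.submatrix_apply, ← hpσ]
    have hone : (T * C) (f p) (f q) = (1 : Matrix (Fin m) (Fin m) R) (f p) (f q) := by
      rw [hTC]
    rw [Matrix.mul_apply] at hone
    simp only [Matrix.sub_apply, Matrix.mul_apply]
    rw [hsum, hsum2, hsum3, hone]
    rcases eq_or_ne p q with rfl | hpq
    · simp
    · have hfpq : f p ≠ f q := by
        intro h
        exact hpq (by rw [hpσ, hqσ, h])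
      rw [Matrix.one_apply_ne hfpq, Matrix.one_apply_ne hpq, sub_zero]
  · intro i hrow j hj
    rw [Matrix.mul_apply, Finset.sum_eq_single i]
    · have : hcloneMat f C i j = 0 := by
        simp only [hcloneMat, Matrix.of_apply]
        split_ifs with h
        · rcases h with rfl | ⟨h1, h2⟩ | ⟨h1, -⟩
          · exact absurd rfl hj
          · have hiσ : i = σ (f i) := hstable_eq i h2
            have hTrow : ∀ l, l ≠ f i → T (f i) l = 0 := by
              intro l hl
              rw [hT, Matrix.submatrix_apply, ← hiσ]
              apply hrow
              intro hc
              exact hl (by rw [← hc, hfσ])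
            exact hCrow (f i) hTrow (f j) (ne_of_gt h1)
          · exact hCtri _ _ h1
        · rfl
      rw [this, mul_zero]
    · intro b _ hb
      rw [hrow b hb, zero_mul]
    · intro h
      exact absurd (Finset.mem_univ i) h
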